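/- Let v be an eigenvector of gᵀg corresponding to its minimum eigenvalue, written in blocks v_1,...,v_N, and suppose the block with largest norm is the last block v_N. Then λ_min(gᵀg) ≥ 1 − σ_max(g_N). -/

import Mathlib

open Matrix

/-- Block diagonal matrix with `N` diagonal blocks of size `n`. -/
def blkDiag {N n : ℕ} (q : Fin N → Matrix (Fin n) (Fin n) ℝ) :
    Matrix (Fin N × Fin n) (Fin N × Fin n) ℝ :=
  fun p r => if p.1 = r.1 then q p.1 p.2 r.2 else 0

/-- Block lower bidiagonal matrix with identity diagonal blocks and subdiagonal
blocks; the block in position `(i, i-1)` (0-based) is `g (i+1)` (1-based paper index),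
i.e. paper's `g_k` sits in (1-based) position `(k, k-1)` for `k = 2,…,N`. -/
def lowerBidiag (N n : ℕ) (g : ℕ → Matrix (Fin n) (Fin n) ℝ) :
    Matrix (Fin N × Fin n) (Fin N × Fin n) ℝ :=
  fun p r =>
    if p.1 = r.1 then (if p.2 = r.2 then 1 else 0)
    else if (r.1 : ℕ) + 1 = (p.1 : ℕ) then g ((p.1 : ℕ) + 1) p.2 r.2
    else 0

/-- Minimum eigenvalue of a Hermitian real matrix. -/
noncomputable def lamMin {ι : Type*} [Fintype ι] [DecidableEq ι]
    (A : Matrix ι ι ℝ) (hA : A.IsHermitian) : ℝ := ⨅ i, hA.eigenvalues i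

/-- Maximum eigenvalue of a Hermitian real matrix. -/
noncomputable def lamMax {ι : Type*} [Fintype ι] [DecidableEq ι]
    (A : Matrix ι ι ℝ) (hA : A.IsHermitian) : ℝ := ⨆ i, hA.eigenvalues i

/-- Minimum singular value: square root of the minimum eigenvalue of `Aᴴ * A`. -/
noncomputable def sigMin {ι : Type*} [Fintype ι] [DecidableEq ι]
    (A : Matrix ι ι ℝ) : ℝ :=
  Real.sqrt (lamMin (Aᴴ * A) (isHermitian_conjTranspose_mul_self A))

/-- Maximum singular value: square root of the maximum eigenvalue of `Aᴴ * A`. -/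
noncomputable def sigMax {ι : Type*} [Fintype ι] [DecidableEq ι]
    (A : Matrix ι ι ℝ) : ℝ :=
  Real.sqrt (lamMax (Aᴴ * A) (isHermitian_conjTranspose_mul_self A))

lemma rayleigh_le {m : Type*} [Fintype m] [DecidableEq m] [Nonempty m]
    (A : Matrix m m ℝ) (hA : A.IsHermitian) (x : m → ℝ) :
    x ⬝ᵥ (A *ᵥ x) ≤ (⨆ i, hA.eigenvalues i) * (x ⬝ᵥ x) := by
  classical
  set U : Matrix m m ℝ := (hA.eigenvectorUnitary : Matrix m m ℝ) with hU
  set y : m → ℝ := star U *ᵥ x with hy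
  have hUU : U * star U = 1 := Unitary.coe_mul_star_self (hA.eigenvectorUnitary)
  have hdot : x ⬝ᵥ (A *ᵥ x) = ∑ i, hA.eigenvalues i * (y i)^2 := by
    conv_lhs => rw [hA.spectral_theorem, Unitary.conjStarAlgAut_apply]
    rw [← hU, ← mulVec_mulVec, ← mulVec_mulVec, dotProduct_mulVec x U,
      ← mulVec_transpose]
    have htr : Uᵀ = star U := by
      ext i j; simp [star, conjTranspose]
    rw [htr, ← hy]
    simp only [dotProduct, mulVec_diagonal, Function.comp_apply, RCLike.ofReal_real_eq_id, id]
    exact Finset.sum_congr rfl fun i _ => by ring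
  have hnorm : y ⬝ᵥ y = x ⬝ᵥ x := by
    rw [hy, dotProduct_mulVec, ← mulVec_transpose]
    have htr : (star U)ᵀ = U := by
      ext i j; simp [star, conjTranspose]
    rw [htr, mulVec_mulVec, hUU, one_mulVec]
  have hbdd : BddAbove (Set.range hA.eigenvalues) := (Set.finite_range _).bddAbove
  calc x ⬝ᵥ (A *ᵥ x) = ∑ i, hA.eigenvalues i * (y i)^2 := hdot
    _ ≤ ∑ i, (⨆ i, hA.eigenvalues i) * (y i)^2 := by
        apply Finset.sum_le_sum
        intro i _
        exact mul_le_mul_of_nonneg_right (le_ciSup hbdd i) (sq_nonneg _)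
    _ = (⨆ i, hA.eigenvalues i) * (y ⬝ᵥ y) := by
        rw [← Finset.mul_sum]; congr 1; simp [dotProduct, sq]
    _ = _ := by rw [hnorm]


lemma lamMax_CTmul_nonneg {m : Type*} [Fintype m] [DecidableEq m] [Nonempty m]
    (A : Matrix m m ℝ) :
    0 ≤ ⨆ i, (isHermitian_conjTranspose_mul_self A).eigenvalues i := by
  obtain ⟨i⟩ := (inferInstance : Nonempty m)
  refine le_trans (Matrix.eigenvalues_conjTranspose_mul_self_nonneg A i)
    (le_ciSup ((Set.finite_range _).bddAbove) i)

lemma mulVec_sq_le {m : Type*} [Fintype m] [DecidableEq m] [Nonempty m]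
    (A : Matrix m m ℝ) (w : m → ℝ) :
    ∑ i, ((A *ᵥ w) i)^2 ≤
      (Real.sqrt (⨆ i, (isHermitian_conjTranspose_mul_self A).eigenvalues i))^2 * ∑ i, (w i)^2 := by
  have h1 : ∑ i, ((A *ᵥ w) i)^2 = w ⬝ᵥ ((Aᴴ * A) *ᵥ w) := by
    rw [← mulVec_mulVec, dotProduct_mulVec w, ← mulVec_transpose]
    have htr : Aᴴᵀ = A := by ext i j; simp [conjTranspose]
    rw [htr]
    simp [dotProduct, sq]
  have h2 := rayleigh_le (Aᴴ * A) (isHermitian_conjTranspose_mul_self A) w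
  rw [Real.sq_sqrt (lamMax_CTmul_nonneg A)]
  rw [h1]
  calc w ⬝ᵥ ((Aᴴ * A) *ᵥ w) ≤ _ := h2
    _ = _ := by congr 1; simp [dotProduct, sq]

/-- If `v` is an eigenvector of `gᵀg` for the minimum eigenvalue and the
block of `v` with largest (Euclidean) norm is the last block `v_N`, then
`λ_min(gᵀg) ≥ 1 − σ_max(g_N)`.  (Blocks are indexed by `Fin N`; the subdiagonal block in
row `i` of `g` is `g (i+1)` in 1-based paper indexing, so the last one is `g N`.) -/
theorem stmt3 (N n : ℕ) [NeZero N] [NeZero n]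
    (g : ℕ → Matrix (Fin n) (Fin n) ℝ)
    (G : Matrix (Fin N × Fin n) (Fin N × Fin n) ℝ) (hGdef : G = lowerBidiag N n g)
    (lastIdx : Fin N) (hlast : (lastIdx : ℕ) = N - 1)
    (v : Fin N × Fin n → ℝ) (hv : v ≠ 0)
    (heig : (Gᴴ * G) *ᵥ v =
      lamMin (Gᴴ * G) (isHermitian_conjTranspose_mul_self G) • v)
    (hbig : ∀ k : Fin N, ∑ a, v (k, a) ^ 2 ≤ ∑ a, v (lastIdx, a) ^ 2) :
    1 - sigMax (g N) ≤ lamMin (Gᴴ * G) (isHermitian_conjTranspose_mul_self G) := by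
  classical
  have hN : 0 < N := Nat.pos_of_ne_zero (NeZero.ne N)
  set lam := lamMin (Gᴴ * G) (isHermitian_conjTranspose_mul_self G) with hlam
  set S := ∑ a, v (lastIdx, a) ^ 2 with hS
  -- S > 0
  have hSpos : 0 < S := by
    obtain ⟨⟨k, c⟩, hp⟩ := Function.ne_iff.mp hv
    simp only [Pi.zero_apply] at hp
    have h0 : (0:ℝ) < v (k, c) ^ 2 := by positivity
    have h1 : 0 < ∑ a, v (k, a) ^ 2 :=
      h0.trans_le (Finset.single_le_sum (f := fun a => v (k, a) ^ 2)
        (fun a _ => sq_nonneg _) (Finset.mem_univ c))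
    exact h1.trans_le (hbig k)
  -- the last-index column of G is a standard basis column
  have hGcol : ∀ (p : Fin N × Fin n) (a : Fin n),
      G p (lastIdx, a) = if p = (lastIdx, a) then 1 else 0 := by
    rintro ⟨k, c⟩ a
    rw [hGdef]
    simp only [lowerBidiag]
    by_cases hk : k = lastIdx
    · subst hk
      simp [Prod.ext_iff]
    · have h2 : ¬((lastIdx : ℕ) + 1 = (k : ℕ)) := by
        have := k.isLt; omega
      simp [hk, h2, Prod.ext_iff]
  -- the previous-block vector (zero when N = 1)
  set w : Fin n → ℝ := fun b => if h : 1 < N then v (⟨N - 2, by omega⟩, b) else 0 with hw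
  -- last-index row of G
  have hGrow : ∀ (a : Fin n) (p : Fin N × Fin n),
      G (lastIdx, a) p =
        (if p = (lastIdx, a) then 1 else 0) +
        (if (p.1 : ℕ) + 1 = (lastIdx : ℕ) then g N a p.2 else 0) := by
    rintro a ⟨j, b⟩
    rw [hGdef]
    simp only [lowerBidiag]
    by_cases hj : lastIdx = j
    · subst hj
      have h2 : ¬((lastIdx : ℕ) + 1 = (lastIdx : ℕ)) := by omega
      simp [h2, Prod.ext_iff, eq_comm]
    · have hj' : ¬(j = lastIdx) := fun h => hj h.symm
      by_cases h3 : (j : ℕ) + 1 = (lastIdx : ℕ)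
      · have hgN : (lastIdx : ℕ) + 1 = N := by omega
        simp [hj, hj', h3, Prod.ext_iff, hgN]
      · simp [hj, hj', h3, Prod.ext_iff]
  -- key equation: lam * v(last,a) = v(last,a) + (g N *ᵥ w) a
  have key : ∀ a : Fin n, lam * v (lastIdx, a) = v (lastIdx, a) + (g N *ᵥ w) a := by
    intro a
    have h1 := congrFun heig (lastIdx, a)
    rw [← mulVec_mulVec] at h1
    have h2 : (Gᴴ *ᵥ (G *ᵥ v)) (lastIdx, a) = (G *ᵥ v) (lastIdx, a) := by
      simp only [mulVec, dotProduct, conjTranspose_apply, star_trivial]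
      rw [Finset.sum_congr rfl (fun p _ => by rw [hGcol p a])]
      simp
    have h3 : (G *ᵥ v) (lastIdx, a) = v (lastIdx, a) + (g N *ᵥ w) a := by
      simp only [mulVec, dotProduct]
      rw [Finset.sum_congr rfl (fun p _ => by rw [hGrow a p])]
      rw [Finset.sum_congr rfl (fun p _ => add_mul _ _ (v p)), Finset.sum_add_distrib]
      congr 1
      · simp
      · simp only [ite_mul, zero_mul]
        rw [Fintype.sum_prod_type]
        by_cases hN1 : 1 < N
        · set prev : Fin N := ⟨N - 2, by omega⟩ with hprev
          have hcond : ∀ j : Fin N, ((j : ℕ) + 1 = (lastIdx : ℕ)) ↔ j = prev := by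
            intro j
            constructor
            · intro h; apply Fin.ext; simp [hprev]; omega
            · intro h; subst h; simp [hprev]; omega
          rw [Finset.sum_congr rfl (fun j _ => by
            rw [Finset.sum_congr rfl (fun b _ => by rw [if_congr (hcond j) rfl rfl])])]
          rw [Finset.sum_congr rfl (fun j _ => by
            rw [show (∑ b, if j = prev then g N a b * v (j, b) else 0)
              = if j = prev then ∑ b, g N a b * v (j, b) else 0 from by split_ifs <;> simp])]
          rw [Finset.sum_ite_eq' Finset.univ prev]
          simp only [Finset.mem_univ, if_true, mulVec, dotProduct, hw, dif_pos hN1]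
          rfl
        · have hcond : ∀ j : Fin N, ¬((j : ℕ) + 1 = (lastIdx : ℕ)) := by
            intro j; have := j.isLt; omega
          simp only [hcond, if_false, Finset.sum_const_zero]
          have : w = 0 := by funext b; rw [hw]; exact dif_neg hN1
          simp [this]
    rw [h2, h3] at h1
    simpa using h1.symm
  -- sum of squares estimate
  have hwS : ∑ b, (w b) ^ 2 ≤ S := by
    by_cases hN1 : 1 < N
    · have : ∀ b, w b = v (⟨N - 2, by omega⟩, b) := fun b => dif_pos hN1
      simp only [this]
      exact hbig _
    · have : ∀ b, w b = 0 := fun b => dif_neg hN1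
      simp only [this]
      simpa using hSpos.le
  have hsq : (lam - 1) ^ 2 * S ≤ sigMax (g N) ^ 2 * S := by
    have h1 : (lam - 1) ^ 2 * S = ∑ a, ((g N *ᵥ w) a) ^ 2 := by
      rw [hS, Finset.mul_sum]
      refine Finset.sum_congr rfl fun a _ => ?_
      have := key a
      have h2 : (g N *ᵥ w) a = (lam - 1) * v (lastIdx, a) := by linarith
      rw [h2]; ring
    have h2 := mulVec_sq_le (g N) w
    have h3 : sigMax (g N) ^ 2 * ∑ b, (w b) ^ 2 ≤ sigMax (g N) ^ 2 * S :=
      mul_le_mul_of_nonneg_left hwS (sq_nonneg _)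
    calc (lam - 1) ^ 2 * S = ∑ a, ((g N *ᵥ w) a) ^ 2 := h1
      _ ≤ sigMax (g N) ^ 2 * ∑ b, (w b) ^ 2 := h2
      _ ≤ sigMax (g N) ^ 2 * S := h3
  have hsig : 0 ≤ sigMax (g N) := Real.sqrt_nonneg _
  have h5 : (lam - 1) ^ 2 ≤ sigMax (g N) ^ 2 :=
    le_of_mul_le_mul_right (by linarith [hsq]) hSpos
  nlinarith [h5, hsig, sq_nonneg (lam - 1 + sigMax (g N))]
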